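/- For every n ∈ ℕ and every pair of indices α, β ∈ 𝕀 ∪ 𝕀_D, the matrices w_α and v_β satisfy ⟨w_α, v_β⟩ = δ_{α,β} (equal to 1 if α = β and 0 otherwise); that is, the family {v_α}_{α ∈ 𝕀 ∪ 𝕀_D} is a dual (bi-orthogonal) basis to the family {w_α}_{α ∈ 𝕀 ∪ 𝕀_D} with respect to the Frobenius inner product on symmetric matrices. -/
import Mathlib


namespace EDG

open Matrix

/-- Frobenius (trace) inner product on real `n × n` matrices: `⟨A, B⟩ = tr (Aᵀ B)`. -/
noncomputable def frob {n : ℕ} (A B : Matrix (Fin n) (Fin n) ℝ) : ℝ :=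
  Matrix.trace (Aᵀ * B)

/-- Frobenius norm. -/
noncomputable def frobNorm {n : ℕ} (A : Matrix (Fin n) (Fin n) ℝ) : ℝ :=
  Real.sqrt (frob A A)

/-- The `i`-th standard basis vector of `ℝⁿ`. -/
def eV (n : ℕ) (i : Fin n) : Fin n → ℝ := Pi.single i 1

/-- The all-ones vector of `ℝⁿ`. -/
def onesV (n : ℕ) : Fin n → ℝ := fun _ => 1

/-- `a_i = e_i − (1/n) 𝟙`. -/
noncomputable def aV (n : ℕ) (i : Fin n) : Fin n → ℝ :=
  eV n i - ((n : ℝ))⁻¹ • onesV n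

/-- `w_{(i,j)} = e_i e_iᵀ + e_j e_jᵀ − e_i e_jᵀ − e_j e_iᵀ` (for `i < j`). -/
noncomputable def wOff (n : ℕ) (i j : Fin n) : Matrix (Fin n) (Fin n) ℝ :=
  vecMulVec (eV n i) (eV n i) + vecMulVec (eV n j) (eV n j)
    - vecMulVec (eV n i) (eV n j) - vecMulVec (eV n j) (eV n i)

/-- `w_{(i,i)} = (1/2)(e_i 𝟙ᵀ + 𝟙 e_iᵀ)`. -/
noncomputable def wDiag (n : ℕ) (i : Fin n) : Matrix (Fin n) (Fin n) ℝ :=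
  ((2 : ℝ))⁻¹ • (vecMulVec (eV n i) (onesV n) + vecMulVec (onesV n) (eV n i))

/-- `v_{(i,j)} = −(1/2)(a_i a_jᵀ + a_j a_iᵀ)` (for `i < j`). -/
noncomputable def vOff (n : ℕ) (i j : Fin n) : Matrix (Fin n) (Fin n) ℝ :=
  (-((2 : ℝ))⁻¹) • (vecMulVec (aV n i) (aV n j) + vecMulVec (aV n j) (aV n i))

/-- `v_{(i,i)} = e_i e_iᵀ − a_i a_iᵀ`. -/
noncomputable def vDiag (n : ℕ) (i : Fin n) : Matrix (Fin n) (Fin n) ℝ :=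
  vecMulVec (eV n i) (eV n i) - vecMulVec (aV n i) (aV n i)
/-- Combined basis element `w_α` for `α = (i,j)` with `i ≤ j`. -/
noncomputable def wB (n : ℕ) (i j : Fin n) : Matrix (Fin n) (Fin n) ℝ :=
  if i = j then wDiag n i else wOff n i j

/-- Combined dual basis element `v_α` for `α = (i,j)` with `i ≤ j`. -/
noncomputable def vB (n : ℕ) (i j : Fin n) : Matrix (Fin n) (Fin n) ℝ :=
  if i = j then vDiag n i else vOff n i j

-- HELPERS (verified)
lemma frob_vmv {n : ℕ} (x y u v : Fin n → ℝ) :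
    frob (vecMulVec x y) (vecMulVec u v) = (x ⬝ᵥ u) * (y ⬝ᵥ v) := by
  rw [dotProduct, dotProduct, Finset.sum_mul_sum]
  simp only [frob, Matrix.trace, Matrix.mul_apply, vecMulVec_apply, Matrix.diag,
    transpose_apply]
  rw [Finset.sum_comm]
  apply Finset.sum_congr rfl; intro a _
  apply Finset.sum_congr rfl; intro b _
  ring

lemma frob_add_left {n : ℕ} (A B C : Matrix (Fin n) (Fin n) ℝ) :
    frob (A + B) C = frob A C + frob B C := by
  simp [frob, transpose_add, add_mul]

lemma frob_sub_left {n : ℕ} (A B C : Matrix (Fin n) (Fin n) ℝ) :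
    frob (A - B) C = frob A C - frob B C := by
  simp [frob, transpose_sub, sub_mul]

lemma frob_smul_left {n : ℕ} (c : ℝ) (A C : Matrix (Fin n) (Fin n) ℝ) :
    frob (c • A) C = c * frob A C := by
  simp [frob, transpose_smul, smul_mul_assoc]

lemma frob_add_right {n : ℕ} (A B C : Matrix (Fin n) (Fin n) ℝ) :
    frob A (B + C) = frob A B + frob A C := by
  simp [frob, mul_add]

lemma frob_sub_right {n : ℕ} (A B C : Matrix (Fin n) (Fin n) ℝ) :
    frob A (B - C) = frob A B - frob A C := by
  simp [frob, mul_sub]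

lemma frob_smul_right {n : ℕ} (c : ℝ) (A B : Matrix (Fin n) (Fin n) ℝ) :
    frob A (c • B) = c * frob A B := by
  simp [frob, mul_smul_comm]

lemma eV_dot_eV {n : ℕ} (i j : Fin n) :
    eV n i ⬝ᵥ eV n j = if i = j then 1 else 0 := by
  simp [eV, dotProduct, Pi.single_apply, eq_comm]

lemma eV_dot_ones {n : ℕ} (i : Fin n) : eV n i ⬝ᵥ onesV n = 1 := by
  simp [eV, onesV, dotProduct, Pi.single_apply]

lemma ones_dot_eV {n : ℕ} (i : Fin n) : onesV n ⬝ᵥ eV n i = 1 := by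
  simp [eV, onesV, dotProduct, Pi.single_apply]

lemma ones_dot_ones {n : ℕ} : onesV n ⬝ᵥ onesV n = n := by
  simp [onesV, dotProduct]

lemma eV_dot_aV {n : ℕ} (i j : Fin n) :
    eV n i ⬝ᵥ aV n j = (if i = j then 1 else 0) - (n : ℝ)⁻¹ := by
  simp only [aV, dotProduct_sub, dotProduct_smul, eV_dot_eV, eV_dot_ones, smul_eq_mul, mul_one]

lemma aV_dot_eV {n : ℕ} (i j : Fin n) :
    aV n i ⬝ᵥ eV n j = (if i = j then 1 else 0) - (n : ℝ)⁻¹ := by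
  have : eV n i ⬝ᵥ eV n j = eV n j ⬝ᵥ eV n i := by
    rw [eV_dot_eV, eV_dot_eV]; simp [eq_comm]
  simp only [aV, sub_dotProduct, smul_dotProduct, eV_dot_eV, ones_dot_eV, smul_eq_mul, mul_one]

lemma ones_dot_aV {n : ℕ} [NeZero n] (j : Fin n) : onesV n ⬝ᵥ aV n j = 0 := by
  have hn : (n : ℝ) ≠ 0 := Nat.cast_ne_zero.mpr (NeZero.ne n)
  simp [aV, dotProduct_sub, dotProduct_smul, ones_dot_eV, ones_dot_ones, hn]

lemma aV_dot_ones {n : ℕ} [NeZero n] (j : Fin n) : aV n j ⬝ᵥ onesV n = 0 := by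
  have hn : (n : ℝ) ≠ 0 := Nat.cast_ne_zero.mpr (NeZero.ne n)
  simp [aV, sub_dotProduct, smul_dotProduct, eV_dot_ones, ones_dot_ones, hn]

lemma aV_dot_aV {n : ℕ} [NeZero n] (i j : Fin n) :
    aV n i ⬝ᵥ aV n j = (if i = j then 1 else 0) - (n : ℝ)⁻¹ := by
  have h1 : eV n i ⬝ᵥ aV n j = (if i = j then 1 else 0) - (n : ℝ)⁻¹ := eV_dot_aV i j
  have h2 : onesV n ⬝ᵥ aV n j = 0 := ones_dot_aV j
  simp only [aV, sub_dotProduct, smul_dotProduct, smul_eq_mul] at *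
  rw [h1, h2]; ring

/-- the family `{v_α}_{α ∈ 𝕀 ∪ 𝕀_D}` is bi-orthogonal (dual) to the family
`{w_α}_{α ∈ 𝕀 ∪ 𝕀_D}` w.r.t. the Frobenius inner product:
`⟨w_α, v_β⟩ = δ_{α,β}` for all `α = (i,j)`, `β = (k,l)` with `i ≤ j`, `k ≤ l`. -/
theorem dual_basis_biorthogonal (n : ℕ) (i j k l : Fin n) (hij : i ≤ j) (hkl : k ≤ l) :
    frob (wB n i j) (vB n k l) = if (i, j) = (k, l) then 1 else 0 := by
  haveI : NeZero n := ⟨(Fin.pos i).ne'⟩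
  simp only [wB, vB, Prod.mk.injEq]
  rcases eq_or_lt_of_le hij with h1 | h1 <;> rcases eq_or_lt_of_le hkl with h2 | h2
  · -- i = j, k = l
    subst h1; subst h2
    rw [if_pos rfl, if_pos rfl]
    simp only [wDiag, vDiag, frob_smul_left, frob_add_left, frob_sub_right, frob_vmv,
      eV_dot_eV, eV_dot_aV, ones_dot_eV, ones_dot_aV]
    split_ifs <;> (first | ring1 | (exfalso; fin_omega))
  · -- i = j, k < l
    subst h1
    rw [if_pos rfl, if_neg h2.ne]
    simp only [wDiag, vOff, frob_smul_left, frob_smul_right, frob_add_left, frob_add_right,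
      frob_vmv, eV_dot_aV, ones_dot_aV]
    split_ifs <;> (first | ring1 | (exfalso; fin_omega))
  · -- i < j, k = l
    subst h2
    rw [if_neg h1.ne, if_pos rfl]
    simp only [wOff, vDiag, frob_sub_left, frob_add_left, frob_sub_right, frob_vmv,
      eV_dot_eV, eV_dot_aV]
    split_ifs <;> (first | ring1 | (exfalso; fin_omega))
  · -- i < j, k < l
    rw [if_neg h1.ne, if_neg h2.ne]
    simp only [wOff, vOff, frob_sub_left, frob_add_left, frob_smul_right, frob_add_right,
      frob_vmv, eV_dot_aV]
    split_ifs <;> (first | ring1 | (exfalso; fin_omega))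

end EDG
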